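/- For any signed permutation (ε,w) ∈ B_n, maj_B(ε,w) = maj_A(ε,w) + nneg(ε,w), where maj_A is the sum of A-descents (including 0 when the first letter is negative), maj_B is the sum of B-descents (including n when the last letter is negative), and nneg is the number of negative letters. -/

import Mathlib

/-- The hyperoctahedral group `Bₙ = {±1}ⁿ ⋊ Sₙ` of signed permutations; an element is a
pair `(w, ε)` of a permutation `w` and a sign vector, encoded with `ε i = 1` in `ZMod 2`
meaning coordinate `i` is negative. Multiplication is
`(ε,u)(ε',v) = (ε·(u·ε'), uv)` with `(u·ε')_i = ε'_{u⁻¹(i)}` (written additively). -/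
def SignedPerm (n : ℕ) : Type := Equiv.Perm (Fin n) × (Fin n → ZMod 2)

namespace SignedPerm

variable {n : ℕ}

instance : Mul (SignedPerm n) := ⟨fun a b => (a.1 * b.1, a.2 + b.2 ∘ ⇑(a.1⁻¹))⟩
instance : One (SignedPerm n) := ⟨(1, 0)⟩
instance : Inv (SignedPerm n) := ⟨fun a => (a.1⁻¹, -(a.2 ∘ ⇑a.1))⟩

theorem mul_def (a b : SignedPerm n) : a * b = (a.1 * b.1, a.2 + b.2 ∘ ⇑(a.1⁻¹)) := rfl
theorem one_def : (1 : SignedPerm n) = ((1 : Equiv.Perm (Fin n)), 0) := rfl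
theorem inv_def (a : SignedPerm n) : a⁻¹ = (a.1⁻¹, -(a.2 ∘ ⇑a.1)) := rfl

instance : Group (SignedPerm n) where
  mul_assoc a b c := by
    rw [mul_def, mul_def, mul_def, mul_def]
    refine Prod.ext (mul_assoc _ _ _) ?_
    funext i
    simp [Function.comp, Equiv.Perm.mul_apply, add_assoc]
  one_mul a := by
    rw [mul_def, one_def]
    refine Prod.ext (one_mul _) ?_
    funext i
    simp
  mul_one a := by
    rw [mul_def, one_def]
    refine Prod.ext (mul_one _) ?_
    funext i
    simp
  inv_mul_cancel a := by
    rw [mul_def, inv_def, one_def]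
    refine Prod.ext (inv_mul_cancel _) ?_
    funext i
    simp [Function.comp, CharTwo.add_self_eq_zero]

/-- The signed letter (as an integer in `{±1,…,±n}`) at (0-indexed) position `i` of the
one-line notation: the value `w(i)+1` (1-indexed), negated when its sign is `-1`. -/
def letter (g : SignedPerm n) (i : Fin n) : ℤ :=
  (if g.2 (g.1 i) = 1 then -1 else 1) * (((g.1 i : ℕ) : ℤ) + 1)

/-- The A-major index: the sum of the A-descents, the positions `i ∈ {1,…,n-1}`
(1-indexed) where `letter i >_A letter (i+1)` in the natural integer order (the
A-descent at `0`, present when the first letter is negative, contributes `0`). -/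
def majA (g : SignedPerm n) : ℕ :=
  ∑ i : Fin n, if h : i.1 + 1 < n then
    (if letter g ⟨i.1 + 1, h⟩ < letter g i then i.1 + 1 else 0) else 0

/-- The key of a signed letter for the B-order `0 <_B 1 <_B ⋯ <_B n <_B -n <_B ⋯ <_B -1`. -/
def bKey (n : ℕ) (a : ℤ) : ℤ := if 0 ≤ a then a else 2 * (n : ℤ) + 1 + a

/-- The B-major index: the sum of the B-descents, the positions `i ∈ {1,…,n-1}`
(1-indexed) where `letter i >_B letter (i+1)`, together with `n` when the last letter
is negative. -/
def majB (g : SignedPerm n) : ℕ :=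
  ∑ i : Fin n, if h : i.1 + 1 < n then
    (if bKey n (letter g ⟨i.1 + 1, h⟩) < bKey n (letter g i) then i.1 + 1 else 0)
  else (if letter g i < 0 then n else 0)

/-- The negative set `Neg(ε,w) = {i : εᵢ = -1}`. -/
def negSet (g : SignedPerm n) : Finset (Fin n) := Finset.univ.filter fun i => g.2 i = 1

/-- The number of negative letters. -/
def nneg (g : SignedPerm n) : ℕ := (negSet g).card

end SignedPerm


private lemma abel_sum (G : ℕ → ℤ) (n : ℕ) :
    ∑ i ∈ Finset.range n, ((i:ℤ)+1)*(G i - G (i+1))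
      = ∑ i ∈ Finset.range n, G i - n * G n := by
  induction n with
  | zero => simp
  | succ m ih =>
    rw [Finset.sum_range_succ, Finset.sum_range_succ (f := G), ih]
    push_cast
    ring

open SignedPerm in
private lemma letter_bounds {n : ℕ} (g : SignedPerm n) (i : Fin n) :
    letter g i ≠ 0 ∧ -(n:ℤ) ≤ letter g i ∧ letter g i ≤ n := by
  unfold SignedPerm.letter
  have h : (g.1 i : ℕ) < n := (g.1 i).2
  refine ⟨?_, ?_, ?_⟩ <;> split_ifs <;> omega

open SignedPerm in
theorem stmt18' (n : ℕ) (g : SignedPerm n) : majB g = majA g + nneg g := by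
  classical
  set F : ℕ → ℤ := fun j => if h : j < n then (if letter g ⟨j, h⟩ < 0 then (1:ℤ) else 0) else 0 with hF
  have key : (majB g : ℤ) = (majA g : ℤ) + (nneg g : ℤ) := by
    have h1 : ∀ i : Fin n,
        (((if h : i.1 + 1 < n then
            (if bKey n (letter g ⟨i.1 + 1, h⟩) < bKey n (letter g i) then i.1 + 1 else 0)
          else (if letter g i < 0 then n else 0)) : ℕ) : ℤ)
        = (((if h : i.1 + 1 < n then
            (if letter g ⟨i.1 + 1, h⟩ < letter g i then i.1 + 1 else 0) else 0) : ℕ) : ℤ)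
          + ((i.1:ℤ)+1) * (F i.1 - F (i.1+1)) := by
      intro i
      obtain ⟨ha0, ha1, ha2⟩ := letter_bounds g i
      by_cases h : i.1 + 1 < n
      · obtain ⟨hb0, hb1, hb2⟩ := letter_bounds g ⟨i.1 + 1, h⟩
        simp only [dif_pos h, hF, Fin.eta]
        unfold SignedPerm.bKey
        split_ifs <;> push_cast <;> first | ring1 | omega
      · have hn : i.1 + 1 = n := by omega
        simp only [dif_neg h, hF, Fin.eta]
        split_ifs <;> push_cast <;> first | ring1 | omega
    have hFn : F n = 0 := by simp [hF]
    have hsum : ∑ i : Fin n, ((i.1:ℤ)+1) * (F i.1 - F (i.1+1)) = (nneg g : ℤ) := by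
      rw [Fin.sum_univ_eq_sum_range (fun j => ((j:ℤ)+1) * (F j - F (j+1))), abel_sum, hFn,
        mul_zero, sub_zero]
      have : ∑ i ∈ Finset.range n, F i = ∑ i : Fin n, (if letter g i < 0 then (1:ℤ) else 0) := by
        rw [← Fin.sum_univ_eq_sum_range (fun j => F j)]
        refine Finset.sum_congr rfl fun i _ => ?_
        simp only [hF]
        rw [dif_pos i.2, Fin.eta]
      rw [this]
      have hlt : ∀ i : Fin n, (letter g i < 0) ↔ g.2 (g.1 i) = 1 := by
        intro i
        unfold SignedPerm.letter
        have : (0:ℤ) < ((g.1 i : ℕ) : ℤ) + 1 := by positivity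
        split_ifs with hh <;> simp [hh] <;> omega
      calc ∑ i : Fin n, (if letter g i < 0 then (1:ℤ) else 0)
          = ∑ i : Fin n, (if g.2 (g.1 i) = 1 then (1:ℤ) else 0) := by
            refine Finset.sum_congr rfl fun i _ => ?_; rw [if_congr (hlt i) rfl rfl]
        _ = ∑ i : Fin n, (if g.2 i = 1 then (1:ℤ) else 0) :=
            Equiv.sum_comp g.1 (fun i => if g.2 i = 1 then (1:ℤ) else 0)
        _ = (nneg g : ℤ) := by
            rw [Finset.sum_boole]
            simp [SignedPerm.nneg, SignedPerm.negSet]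
    unfold SignedPerm.majB SignedPerm.majA
    push_cast [Finset.sum_congr rfl (fun i _ => h1 i)]
    rw [Finset.sum_add_distrib, hsum]
  exact_mod_cast key

open SignedPerm in
/-- for any signed permutation,
`maj_B(ε,w) = maj_A(ε,w) + nneg(ε,w)`. -/
theorem stmt18 (n : ℕ) (g : SignedPerm n) : majB g = majA g + nneg g := stmt18' n g
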